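/- Let Π_D be either the BBDS projection Π^BBDS_D or the DLL projection Π^DLL_D. Let S and S' be a pair of edge-neighboring or node-neighboring insertion-only graph streams of length T, where S' is the larger stream (containing at most one additional node as compared to S). For every edge e = {u,v} that arrives in S at or before time t ∈ [T], if both u and v have degree at most D in flat(S'_[t]), then e is included in both projected streams Π_D(S) and Π_D(S'). -/

import Mathlib

open Finset

/-- A finite graph: a finite vertex set together with a finite set of undirected edges. -/
structure FinGraph where
  verts : Finset ℕ
  edges : Finset (Sym2 ℕ)

namespace FinGraph

/-- A finite graph is valid if every edge is a non-loop both of whose endpoints are vertices. -/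
def Valid (G : FinGraph) : Prop :=
  ∀ e ∈ G.edges, ¬ e.IsDiag ∧ ∀ v ∈ e, v ∈ G.verts

/-- The degree of a vertex: the number of edges containing it. -/
def degree (G : FinGraph) (v : ℕ) : ℕ :=
  (G.edges.filter (fun e => v ∈ e)).card

/-- Remove a node and all of its adjacent edges. -/
def removeNode (G : FinGraph) (v : ℕ) : FinGraph :=
  ⟨G.verts.erase v, G.edges.filter (fun e => v ∉ e)⟩

/-- Remove a single edge. -/
def removeEdge (G : FinGraph) (e : Sym2 ℕ) : FinGraph :=
  ⟨G.verts, G.edges.erase e⟩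

/-- `G` is `(D, ℓ)`-bounded: it has at most `ℓ` nodes of degree greater than `D`. -/
def DLBounded (G : FinGraph) (D ℓ : ℕ) : Prop :=
  (G.verts.filter (fun v => D < G.degree v)).card ≤ ℓ

end FinGraph

/-- One graph is obtained from the other by removing one node and all of its adjacent edges. -/
def nodeNeighborGraph (G G' : FinGraph) : Prop :=
  (∃ v ∈ G.verts, G' = G.removeNode v) ∨ (∃ v ∈ G'.verts, G = G'.removeNode v)

/-- `G'` is obtained from `G` by removing a single edge, an isolated node,
or a degree-one node together with its adjacent edge. -/
def edgeRemovalGraph (G G' : FinGraph) : Prop :=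
  (∃ e ∈ G.edges, G' = G.removeEdge e) ∨
  (∃ v ∈ G.verts, G.degree v = 0 ∧ G' = FinGraph.mk (G.verts.erase v) G.edges) ∨
  (∃ v ∈ G.verts, G.degree v = 1 ∧ G' = G.removeNode v)

/-- Edge-neighboring graphs. -/
def edgeNeighborGraph (G G' : FinGraph) : Prop :=
  edgeRemovalGraph G G' ∨ edgeRemovalGraph G' G

/-- The length of a shortest chain of valid graphs from `A` to `B` in which
consecutive graphs are related by `R`. -/
noncomputable def graphChainDist (R : FinGraph → FinGraph → Prop) (A B : FinGraph) : ℕ :=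
  sInf {n | ∃ f : ℕ → FinGraph, f 0 = A ∧ f n = B ∧ (∀ i ≤ n, (f i).Valid) ∧
    ∀ i < n, R (f i) (f (i + 1))}

/-- Node distance between finite graphs. -/
noncomputable def graphNodeDist : FinGraph → FinGraph → ℕ := graphChainDist nodeNeighborGraph

/-- Edge distance between finite graphs. -/
noncomputable def graphEdgeDist : FinGraph → FinGraph → ℕ := graphChainDist edgeNeighborGraph

/-- An insertion-only graph stream: the nodes and edges arriving at each time step. -/
structure GraphStream where
  nodes : ℕ → Finset ℕ
  edges : ℕ → Finset (Sym2 ℕ)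

namespace GraphStream

/-- Validity of a graph stream of length `T`: arrivals happen only at times `1, …, T`,
no node or edge arrives twice, and every edge is a non-loop whose endpoints
arrive at or before the edge does. -/
def Valid (T : ℕ) (S : GraphStream) : Prop :=
  (∀ t, ((S.nodes t).Nonempty ∨ (S.edges t).Nonempty) → 1 ≤ t ∧ t ≤ T) ∧
  (∀ s t, s ≠ t → Disjoint (S.nodes s) (S.nodes t)) ∧
  (∀ s t, s ≠ t → Disjoint (S.edges s) (S.edges t)) ∧
  (∀ t, ∀ e ∈ S.edges t, ¬ e.IsDiag ∧ ∀ v ∈ e, ∃ s ≤ t, v ∈ S.nodes s)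

/-- The flattened graph of the stream through time `t`. -/
def flat (S : GraphStream) (t : ℕ) : FinGraph :=
  ⟨(Finset.range (t + 1)).biUnion S.nodes, (Finset.range (t + 1)).biUnion S.edges⟩

/-- Remove a node and all of its adjacent edges from a stream. -/
def removeNode (S : GraphStream) (v : ℕ) : GraphStream :=
  ⟨fun t => (S.nodes t).erase v, fun t => (S.edges t).filter (fun e => v ∉ e)⟩

/-- Remove a single edge from a stream. -/
def removeEdge (S : GraphStream) (e : Sym2 ℕ) : GraphStream :=
  ⟨S.nodes, fun t => (S.edges t).erase e⟩

/-- Truncation of a stream: keep only arrivals at times `≤ t`. -/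
def trunc (S : GraphStream) (t : ℕ) : GraphStream :=
  ⟨fun s => if s ≤ t then S.nodes s else ∅, fun s => if s ≤ t then S.edges s else ∅⟩

/-- `v` arrives at some point in the stream. -/
def hasNode (S : GraphStream) (v : ℕ) : Prop :=
  ∃ t, v ∈ S.nodes t

/-- The stream is `(D, ℓ)`-bounded through time `t`. -/
def DLBoundedThrough (S : GraphStream) (D ℓ t : ℕ) : Prop :=
  (S.flat t).DLBounded D ℓ

end GraphStream

/-- `S'` is obtained from `S` by removing one node and all of its adjacent edges
(which may arrive at many time steps). -/
def nodeRemovalStream (S S' : GraphStream) : Prop :=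
  ∃ v, S.hasNode v ∧ S' = S.removeNode v

/-- Node-neighboring streams. -/
def nodeNeighborStream (S S' : GraphStream) : Prop :=
  nodeRemovalStream S S' ∨ nodeRemovalStream S' S

/-- `S'` is obtained from the length-`T` stream `S` by removing a single edge,
an isolated node, or a degree-one node together with its adjacent edge. -/
def edgeRemovalStream (T : ℕ) (S S' : GraphStream) : Prop :=
  (∃ t, ∃ e ∈ S.edges t, S' = S.removeEdge e) ∨
  (∃ v, S.hasNode v ∧ (S.flat T).degree v ≤ 1 ∧ S' = S.removeNode v)

/-- Edge-neighboring streams (of length `T`). -/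
def edgeNeighborStream (T : ℕ) (S S' : GraphStream) : Prop :=
  edgeRemovalStream T S S' ∨ edgeRemovalStream T S' S

/-- Length of a shortest chain of valid streams of length `T` in which consecutive
streams are related by `R`. -/
noncomputable def streamChainDist (T : ℕ) (R : GraphStream → GraphStream → Prop)
    (A B : GraphStream) : ℕ :=
  sInf {n | ∃ f : ℕ → GraphStream, f 0 = A ∧ f n = B ∧ (∀ i ≤ n, (f i).Valid T) ∧
    ∀ i < n, R (f i) (f (i + 1))}

/-- Node distance between streams of length `T`. -/
noncomputable def streamNodeDist (T : ℕ) : GraphStream → GraphStream → ℕ :=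
  streamChainDist T nodeNeighborStream

/-- Edge distance between streams of length `T`. -/
noncomputable def streamEdgeDist (T : ℕ) : GraphStream → GraphStream → ℕ :=
  streamChainDist T (edgeNeighborStream T)

/-- A fixed injective key on undirected edges, providing the consistent total order in
which edges arriving at the same time step are processed. -/
def edgeKey : Sym2 ℕ → ℕ :=
  Sym2.lift ⟨fun a b => Nat.pair (min a b) (max a b), fun a b => by
    dsimp only; rw [inf_comm, sup_comm]⟩

/-- The two endpoints of an edge, as an ordered pair. -/
def endpointsOf (e : Sym2 ℕ) : ℕ × ℕ := (edgeKey e).unpair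

/-- The edges of a finite edge set, listed in increasing `edgeKey` order. -/
def sortEdges (E : Finset (Sym2 ℕ)) : List (Sym2 ℕ) :=
  ((E.image edgeKey).sort (· ≤ ·)).map fun k => s(k.unpair.1, k.unpair.2)

/-- All edges of a stream of length `T`, tagged with their arrival times, in processing
order: lexicographically by (arrival time, consistent edge order). -/
def GraphStream.procList (S : GraphStream) (T : ℕ) : List (ℕ × Sym2 ℕ) :=
  (List.range (T + 1)).flatMap fun t => (sortEdges (S.edges t)).map fun e => (t, e)

/-- One step of the greedy projection with degree bound `D`.  The state consists of the
degree counters together with the edges kept so far (indexed by arrival time).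
If `bbds = true` the counters of the endpoints are incremented for every processed edge
(the BBDS rule); if `bbds = false` they are incremented only when the edge is kept
(the DLL rule). -/
def projStep (D : ℕ) (bbds : Bool) (st : (ℕ → ℕ) × (ℕ → Finset (Sym2 ℕ)))
    (p : ℕ × Sym2 ℕ) : (ℕ → ℕ) × (ℕ → Finset (Sym2 ℕ)) :=
  let d := st.1
  let u := (endpointsOf p.2).1
  let v := (endpointsOf p.2).2
  let keep : Bool := decide (d u < D ∧ d v < D)
  ((if bbds || keep then fun w => if w = u ∨ w = v then d w + 1 else d w else d),
   (if keep then fun s => if s = p.1 then insert p.2 (st.2 s) else st.2 s else st.2))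

/-- The time-aware projection with degree bound `D` on streams of length `T`:
the BBDS projection if `bbds = true` and the DLL projection if `bbds = false`.
All arriving nodes are kept; an arriving edge is kept (at its arrival time) iff both of
its endpoints have counter value `< D` when the edge is processed. -/
def project (bbds : Bool) (D T : ℕ) (S : GraphStream) : GraphStream :=
  ⟨S.nodes,
   ((S.procList T).foldl (projStep D bbds)
      ((fun _ => 0 : ℕ → ℕ), (fun _ => ∅ : ℕ → Finset (Sym2 ℕ)))).2⟩

/-- The BBDS projection `Π^BBDS_D` on streams of length `T`. -/
def projBBDS (D T : ℕ) : GraphStream → GraphStream := project true D T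

/-- The DLL projection `Π^DLL_D` on streams of length `T`. -/
def projDLL (D T : ℕ) : GraphStream → GraphStream := project false D T

section Aux

lemma mk_endpointsOf (e : Sym2 ℕ) : s((endpointsOf e).1, (endpointsOf e).2) = e := by
  induction e using Sym2.ind with
  | _ a b =>
    simp only [endpointsOf, edgeKey, Sym2.lift_mk, Nat.unpair_pair]
    rcases le_total a b with h | h
    · rw [min_eq_left h, max_eq_right h]
    · rw [min_eq_right h, max_eq_left h]; exact Sym2.eq_swap

lemma fst_endpointsOf_mem (e : Sym2 ℕ) : (endpointsOf e).1 ∈ e := by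
  induction e using Sym2.ind with
  | _ a b =>
    simp only [endpointsOf, edgeKey, Sym2.lift_mk, Nat.unpair_pair]
    rcases le_total a b with h | h
    · rw [min_eq_left h]; exact Sym2.mem_mk_left _ _
    · rw [min_eq_right h]; exact Sym2.mem_mk_right _ _

lemma snd_endpointsOf_mem (e : Sym2 ℕ) : (endpointsOf e).2 ∈ e := by
  induction e using Sym2.ind with
  | _ a b =>
    simp only [endpointsOf, edgeKey, Sym2.lift_mk, Nat.unpair_pair]
    rcases le_total a b with h | h
    · rw [max_eq_right h]; exact Sym2.mem_mk_right _ _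
    · rw [max_eq_left h]; exact Sym2.mem_mk_left _ _

lemma mem_sortEdges {E : Finset (Sym2 ℕ)} {e : Sym2 ℕ} : e ∈ sortEdges E ↔ e ∈ E := by
  unfold sortEdges
  simp only [List.mem_map, Finset.mem_sort, Finset.mem_image]
  constructor
  · rintro ⟨k, ⟨e', he', rfl⟩, rfl⟩
    have h := mk_endpointsOf e'
    simp only [endpointsOf] at h
    rwa [h]
  · intro h
    refine ⟨edgeKey e, ⟨e, h, rfl⟩, ?_⟩
    have h2 := mk_endpointsOf e
    simpa only [endpointsOf] using h2

lemma sortEdges_nodup (E : Finset (Sym2 ℕ)) : (sortEdges E).Nodup := by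
  unfold sortEdges
  refine List.Nodup.map_on ?_ (Finset.sort_nodup _ _)
  intro k1 h1 k2 h2 heq
  rw [Finset.mem_sort, Finset.mem_image] at h1 h2
  obtain ⟨e1, _, rfl⟩ := h1
  obtain ⟨e2, _, rfl⟩ := h2
  have g1 := mk_endpointsOf e1
  have g2 := mk_endpointsOf e2
  simp only [endpointsOf] at g1 g2
  rw [g1, g2] at heq
  rw [heq]

lemma procList_snd (S : GraphStream) (T : ℕ) :
    (S.procList T).map Prod.snd = (List.range (T+1)).flatMap (fun t => sortEdges (S.edges t)) := by
  unfold GraphStream.procList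
  rw [List.map_flatMap]
  simp [List.map_map, Function.comp_def]

lemma procList_snd_nodup {S : GraphStream} {T T' : ℕ} (hS : S.Valid T') :
    ((S.procList T).map Prod.snd).Nodup := by
  rw [procList_snd]
  rw [List.nodup_flatMap]
  refine ⟨fun t _ => sortEdges_nodup _, ?_⟩
  refine (List.nodup_range (n := T+1)).imp ?_
  intro a b hne
  intro x hx hx'
  rw [mem_sortEdges] at hx hx'
  exact (Finset.disjoint_left.mp (hS.2.2.1 a b hne) hx) hx'

end Aux


lemma procList_decomp {S : GraphStream} {T s : ℕ} {e : Sym2 ℕ}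
    (hs : s ≤ T) (he : e ∈ S.edges s) :
    ∃ L1 L2, S.procList T = L1 ++ (s, e) :: L2 ∧
      ∀ p ∈ L1, p.1 ≤ s ∧ p.2 ∈ S.edges p.1 := by
  obtain ⟨B1, B2, hB⟩ := List.append_of_mem (mem_sortEdges.mpr he)
  have hrange : List.range (T+1)
      = (List.range s ++ [s]) ++ List.map (fun x => (s+1) + x) (List.range (T - s)) := by
    rw [← List.range_succ, ← List.range_add]
    congr 1
    omega
  refine ⟨(List.range s).flatMap (fun r => (sortEdges (S.edges r)).map fun e' => (r, e'))
      ++ B1.map (fun e' => (s, e')),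
    B2.map (fun e' => (s, e'))
      ++ (List.map (fun x => (s+1) + x) (List.range (T - s))).flatMap
          (fun r => (sortEdges (S.edges r)).map fun e' => (r, e')), ?_, ?_⟩
  · unfold GraphStream.procList
    rw [hrange, List.flatMap_append, List.flatMap_append, List.flatMap_singleton, hB,
      List.map_append, List.map_cons]
    simp [List.append_assoc]
  · intro p hp
    rcases List.mem_append.mp hp with h | h
    · rw [List.mem_flatMap] at h
      obtain ⟨r, hr, hp2⟩ := h
      rw [List.mem_map] at hp2
      obtain ⟨e', he', rfl⟩ := hp2
      exact ⟨le_of_lt (List.mem_range.mp hr), mem_sortEdges.mp he'⟩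
    · rw [List.mem_map] at h
      obtain ⟨e', he', rfl⟩ := h
      refine ⟨le_refl s, mem_sortEdges.mp ?_⟩
      rw [hB]
      exact List.mem_append_left _ he'

lemma foldl_counter_le (D : ℕ) (bbds : Bool) (w : ℕ) :
    ∀ (L : List (ℕ × Sym2 ℕ)) (init : (ℕ → ℕ) × (ℕ → Finset (Sym2 ℕ))),
    (L.foldl (projStep D bbds) init).1 w ≤ init.1 w + L.countP (fun p => decide (w ∈ p.2)) := by
  intro L
  induction L with
  | nil => intro init; simp
  | cons p L ih =>
    intro init
    rw [List.foldl_cons, List.countP_cons]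
    simp only [decide_eq_true_eq]
    refine (ih _).trans ?_
    have hstep : (projStep D bbds init p).1 w
        ≤ init.1 w + (if w ∈ p.2 then 1 else 0) := by
      simp only [projStep]
      split
      · by_cases hw : w = (endpointsOf p.2).1 ∨ w = (endpointsOf p.2).2
        · have hm : w ∈ p.2 := by
            rcases hw with h | h
            · rw [h]; exact fst_endpointsOf_mem _
            · rw [h]; exact snd_endpointsOf_mem _
          simp [hw, hm]
        · simp [hw]
      · simp
    omega

lemma foldl_mem_mono (D : ℕ) (bbds : Bool) (r : ℕ) (e : Sym2 ℕ) :
    ∀ (L : List (ℕ × Sym2 ℕ)) (init : (ℕ → ℕ) × (ℕ → Finset (Sym2 ℕ))),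
    e ∈ init.2 r → e ∈ (L.foldl (projStep D bbds) init).2 r := by
  intro L
  induction L with
  | nil => intro init h; exact h
  | cons p L ih =>
    intro init h
    rw [List.foldl_cons]
    apply ih
    simp only [projStep]
    split
    all_goals beta_reduce
    · split
      · exact Finset.mem_insert_of_mem h
      · exact h
    · exact h

lemma project_keeps (bbds : Bool) {D T : ℕ} {S : GraphStream} (hS : S.Valid T)
    {s t : ℕ} (hst : s ≤ t) (htT : t ≤ T) {e : Sym2 ℕ} (he : e ∈ S.edges s)
    (hdeg : ∀ w ∈ e, (S.flat t).degree w ≤ D) :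
    e ∈ (project bbds D T S).edges s := by
  obtain ⟨L1, L2, hL, hL1⟩ := procList_decomp (hst.trans htT) he
  have hnodup : ((S.procList T).map Prod.snd).Nodup := procList_snd_nodup hS
  rw [hL, List.map_append, List.map_cons] at hnodup
  obtain ⟨hnd1, hnd2, hdisj⟩ := List.nodup_append'.mp hnodup
  have heL1 : e ∉ L1.map Prod.snd := fun hm => hdisj hm List.mem_cons_self
  have heflat : e ∈ (S.flat t).edges := by
    rw [GraphStream.flat, Finset.mem_biUnion]
    exact ⟨s, Finset.mem_range.mpr (by omega), he⟩
  have key : ∀ w ∈ e,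
      (L1.foldl (projStep D bbds) ((fun _ => 0), (fun _ => ∅))).1 w < D := by
    intro w hw
    have hcnt := foldl_counter_le D bbds w L1 ((fun _ => 0), (fun _ => ∅))
    have hefilter : e ∈ (S.flat t).edges.filter (fun e' => w ∈ e') :=
      Finset.mem_filter.mpr ⟨heflat, hw⟩
    have hmapnodup : ((L1.filter (fun p => decide (w ∈ p.2))).map Prod.snd).Nodup :=
      ((List.filter_sublist : List.Sublist (L1.filter (fun p => decide (w ∈ p.2))) L1).map Prod.snd).nodup hnd1
    have hsubF : ∀ x ∈ (L1.filter (fun p => decide (w ∈ p.2))).map Prod.snd,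
        x ∈ ((S.flat t).edges.filter (fun e' => w ∈ e')).erase e := by
      intro x hx
      rw [List.mem_map] at hx
      obtain ⟨p, hp, rfl⟩ := hx
      rw [List.mem_filter] at hp
      obtain ⟨hpL1, hpw⟩ := hp
      obtain ⟨hp1, hp2⟩ := hL1 p hpL1
      refine Finset.mem_erase.mpr ⟨?_, Finset.mem_filter.mpr ⟨?_, of_decide_eq_true hpw⟩⟩
      · intro hxe
        exact heL1 (hxe ▸ List.mem_map.mpr ⟨p, hpL1, rfl⟩)
      · rw [GraphStream.flat, Finset.mem_biUnion]
        exact ⟨p.1, Finset.mem_range.mpr (by omega), hp2⟩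
    have hlen : L1.countP (fun p => decide (w ∈ p.2))
        ≤ (((S.flat t).edges.filter (fun e' => w ∈ e')).erase e).card := by
      rw [List.countP_eq_length_filter, ← List.length_map Prod.snd,
        ← List.toFinset_card_of_nodup hmapnodup]
      exact Finset.card_le_card (fun x hx => hsubF x (List.mem_toFinset.mp hx))
    have hcard : (((S.flat t).edges.filter (fun e' => w ∈ e')).erase e).card
        = (S.flat t).degree w - 1 := by
      rw [Finset.card_erase_of_mem hefilter]; rfl
    have hpos : 1 ≤ (S.flat t).degree w := by
      have : 0 < ((S.flat t).edges.filter (fun e' => w ∈ e')).card :=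
        Finset.card_pos.mpr ⟨e, hefilter⟩
      exact this
    have hD := hdeg w hw
    simp only at hcnt
    omega
  show e ∈ ((S.procList T).foldl (projStep D bbds)
      ((fun _ => 0), (fun _ => ∅))).2 s
  rw [hL, List.foldl_append, List.foldl_cons]
  apply foldl_mem_mono
  have hu := key _ (fst_endpointsOf_mem e)
  have hv := key _ (snd_endpointsOf_mem e)
  simp only [projStep]
  simp [hu, hv]

/-- edges between low-degree nodes remain in both projections.
Let `Π_D` be either the BBDS or the DLL projection.  Let `S, S'` be edge- or
node-neighboring insertion-only graph streams of length `T` with `S'` the larger stream.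
For every edge `e = {u, v}` arriving in `S` at or before time `t ∈ [T]`, if both `u` and
`v` have degree at most `D` in `flat(S'_[t])`, then `e` is included in both projected
streams `Π_D(S)` and `Π_D(S')`. -/
theorem edges_between_low_degree_nodes_remain (bbds : Bool) (D T : ℕ)
    (S S' : GraphStream) (hS : S.Valid T) (hS' : S'.Valid T)
    (hnb : edgeRemovalStream T S' S ∨ nodeRemovalStream S' S)
    (t : ℕ) (ht1 : 1 ≤ t) (htT : t ≤ T)
    (e : Sym2 ℕ) (s : ℕ) (hs : s ≤ t) (he : e ∈ S.edges s)
    (hdeg : ∀ w ∈ e, (S'.flat t).degree w ≤ D) :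
    (∃ r, e ∈ (project bbds D T S).edges r) ∧ (∃ r, e ∈ (project bbds D T S').edges r) := by
  have hsub : ∀ r, S.edges r ⊆ S'.edges r := by
    rcases hnb with (⟨t0, e0, _, hS0⟩ | ⟨v, _, _, hS0⟩) | ⟨v, _, hS0⟩ <;> subst hS0 <;> intro r
    · exact Finset.erase_subset _ _
    · exact Finset.filter_subset _ _
    · exact Finset.filter_subset _ _
  have hdegS : ∀ w ∈ e, (S.flat t).degree w ≤ D := by
    intro w hw
    refine le_trans ?_ (hdeg w hw)
    apply Finset.card_le_card
    apply Finset.filter_subset_filter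
    intro x hx
    rw [GraphStream.flat, Finset.mem_biUnion] at hx ⊢
    obtain ⟨r, hr, hxr⟩ := hx
    exact ⟨r, hr, hsub r hxr⟩
  exact ⟨⟨s, project_keeps bbds hS hs htT he hdegS⟩,
         ⟨s, project_keeps bbds hS' hs htT (hsub s he) hdeg⟩⟩
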